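/- Let u : ℝ × ℝ → ℝ be twice continuously differentiable and satisfy the heat equation u_t = u_xx. Let a ∈ ℝ and restrict to the open set where 1 + 4at > 0. Then the function v(x,t) = (1 + 4at)^{-1/2}·exp(−a·x²/(1 + 4at))·u( x/(1 + 4at), t/(1 + 4at) ) also satisfies v_t = v_xx on that set. That is, the heat equation admits the one-parameter projective symmetry group generated by X₅ = 4t²∂/∂t + 4tx∂/∂x − (x² + 2t)u∂/∂u. -/

import Mathlib

open Real

set_option maxHeartbeats 1000000


noncomputable def Wf (U : ℝ × ℝ → ℝ) (a : ℝ) : ℝ × ℝ → ℝ := fun p =>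
  (1 + 4 * a * p.2) ^ (-(1 / 2) : ℝ) * Real.exp (-(a * p.1 ^ 2) / (1 + 4 * a * p.2))
    * U (p.1 / (1 + 4 * a * p.2), p.2 / (1 + 4 * a * p.2))

noncomputable def WXf (U : ℝ × ℝ → ℝ) (a : ℝ) : ℝ × ℝ → ℝ := fun p =>
  (1 + 4 * a * p.2) ^ (-(1 / 2) : ℝ) * Real.exp (-(a * p.1 ^ 2) / (1 + 4 * a * p.2))
    * ((-2 * a * p.1 / (1 + 4 * a * p.2)) * U (p.1 / (1 + 4 * a * p.2), p.2 / (1 + 4 * a * p.2))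
       + fderiv ℝ U (p.1 / (1 + 4 * a * p.2), p.2 / (1 + 4 * a * p.2)) (1, 0) / (1 + 4 * a * p.2))

lemma clm_pair (L : ℝ × ℝ →L[ℝ] ℝ) (d1 d2 : ℝ) :
    L (d1, d2) = d1 * L (1, 0) + d2 * L (0, 1) := by
  have h : (d1, d2) = d1 • ((1:ℝ), (0:ℝ)) + d2 • ((0:ℝ), (1:ℝ)) := by
    simp [Prod.ext_iff]
  rw [h, map_add, map_smul, map_smul, smul_eq_mul, smul_eq_mul]

lemma px_eq {f : ℝ × ℝ → ℝ} {p : ℝ × ℝ} {d : ℝ} (hf : DifferentiableAt ℝ f p)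
    (hd : HasDerivAt (fun y => f (y, p.2)) d p.1) : fderiv ℝ f p (1, 0) = d := by
  have h : HasDerivAt (fun y => f (y, p.2)) (fderiv ℝ f p (1, 0)) p.1 :=
    hf.hasFDerivAt.comp_hasDerivAt p.1 (HasDerivAt.prodMk (hasDerivAt_id p.1) (hasDerivAt_const p.1 p.2))
  exact h.unique hd

lemma pt_eq {f : ℝ × ℝ → ℝ} {p : ℝ × ℝ} {d : ℝ} (hf : DifferentiableAt ℝ f p)
    (hd : HasDerivAt (fun τ => f (p.1, τ)) d p.2) : fderiv ℝ f p (0, 1) = d := by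
  have h : HasDerivAt (fun τ => f (p.1, τ)) (fderiv ℝ f p (0, 1)) p.2 :=
    hf.hasFDerivAt.comp_hasDerivAt p.2 (HasDerivAt.prodMk (hasDerivAt_const p.2 p.1) (hasDerivAt_id p.2))
  exact h.unique hd

lemma diffAt_div {c d : ℝ × ℝ → ℝ} {p : ℝ × ℝ} (hc : DifferentiableAt ℝ c p)
    (hd : DifferentiableAt ℝ d p) (hne : d p ≠ 0) :
    DifferentiableAt ℝ (fun q => c q / d q) p := by
  simp only [div_eq_mul_inv]; exact hc.mul (hd.inv hne)

theorem heatAux (U : ℝ × ℝ → ℝ) (hU : ContDiff ℝ 2 U)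
    (hh : ∀ q : ℝ × ℝ, fderiv ℝ U q (0, 1)
      = fderiv ℝ (fun p : ℝ × ℝ => fderiv ℝ U p (1, 0)) q (1, 0))
    (a x t : ℝ) (ht : 0 < 1 + 4 * a * t) :
    fderiv ℝ (Wf U a) (x, t) (0, 1)
      = fderiv ℝ (fun p : ℝ × ℝ => fderiv ℝ (Wf U a) p (1, 0)) (x, t) (1, 0) := by
  have hUd : Differentiable ℝ U := hU.differentiable (by norm_num)
  have hux : Differentiable ℝ (fun q : ℝ × ℝ => fderiv ℝ U q (1, 0)) :=
    ((hU.fderiv_right (m := 1) (by norm_num)).differentiable one_ne_zero).clm_apply (differentiable_const _)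
  have hSd : ∀ p : ℝ × ℝ, DifferentiableAt ℝ (fun p : ℝ × ℝ => 1 + 4 * a * p.2) p := by
    intro p; fun_prop
  have hφd : ∀ p : ℝ × ℝ, 0 < 1 + 4 * a * p.2 →
      DifferentiableAt ℝ (fun p : ℝ × ℝ =>
        (p.1 / (1 + 4 * a * p.2), p.2 / (1 + 4 * a * p.2))) p := by
    intro p hp
    exact DifferentiableAt.prodMk (diffAt_div differentiableAt_fst (hSd p) hp.ne')
      (diffAt_div differentiableAt_snd (hSd p) hp.ne')
  have hcore : ∀ p : ℝ × ℝ, 0 < 1 + 4 * a * p.2 →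
      DifferentiableAt ℝ (fun p : ℝ × ℝ => (1 + 4 * a * p.2) ^ (-(1 / 2) : ℝ)
        * Real.exp (-(a * p.1 ^ 2) / (1 + 4 * a * p.2))) p := by
    intro p hp
    exact ((hSd p).rpow_const (Or.inl hp.ne')).mul
      (DifferentiableAt.exp (diffAt_div (by fun_prop) (hSd p) hp.ne'))
  have hWd : ∀ p : ℝ × ℝ, 0 < 1 + 4 * a * p.2 → DifferentiableAt ℝ (Wf U a) p := by
    intro p hp
    exact (hcore p hp).mul ((hUd _).comp p (hφd p hp))
  have hWXd : ∀ p : ℝ × ℝ, 0 < 1 + 4 * a * p.2 → DifferentiableAt ℝ (WXf U a) p := by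
    intro p hp
    exact (hcore p hp).mul
      (((diffAt_div (by fun_prop) (hSd p) hp.ne').mul ((hUd _).comp p (hφd p hp))).add
        (diffAt_div ((hux _).comp p (hφd p hp)) (hSd p) hp.ne'))
  -- the x-partial of Wf equals WXf on the region
  have hWX : ∀ p : ℝ × ℝ, 0 < 1 + 4 * a * p.2 → fderiv ℝ (Wf U a) p (1, 0) = WXf U a p := by
    rintro ⟨x0, τ⟩ hp
    replace hp : 0 < 1 + 4 * a * τ := hp
    refine px_eq (hWd _ hp) ?_
    show HasDerivAt (fun y => Wf U a (y, τ)) (WXf U a (x0, τ)) x0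
    have hA : HasDerivAt (fun y : ℝ => -(a * y ^ 2) / (1 + 4 * a * τ))
        (-(a * (2 * x0 ^ 1)) / (1 + 4 * a * τ)) x0 := by
      have := (((hasDerivAt_pow 2 x0).const_mul a).neg).div_const (1 + 4 * a * τ)
      simpa using this
    have hE : HasDerivAt (fun y : ℝ => Real.exp (-(a * y ^ 2) / (1 + 4 * a * τ)))
        (Real.exp (-(a * x0 ^ 2) / (1 + 4 * a * τ)) * (-(a * (2 * x0 ^ 1)) / (1 + 4 * a * τ)))
        x0 := hA.exp
    have hg : HasDerivAt (fun y : ℝ => (y / (1 + 4 * a * τ), τ / (1 + 4 * a * τ)))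
        ((1 / (1 + 4 * a * τ) : ℝ), (0 : ℝ)) x0 := by
      have := HasDerivAt.prodMk ((hasDerivAt_id x0).div_const (1 + 4 * a * τ))
        (hasDerivAt_const x0 (τ / (1 + 4 * a * τ)))
      simpa using this
    have hUs : HasDerivAt (fun y : ℝ => U (y / (1 + 4 * a * τ), τ / (1 + 4 * a * τ)))
        (fderiv ℝ U (x0 / (1 + 4 * a * τ), τ / (1 + 4 * a * τ)) (1 / (1 + 4 * a * τ), 0)) x0 :=
      (hUd _).hasFDerivAt.comp_hasDerivAt x0 hg
    have hmul := (hE.const_mul ((1 + 4 * a * τ) ^ (-(1 / 2) : ℝ))).mul hUs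
    rw [clm_pair (fderiv ℝ U (x0 / (1 + 4 * a * τ), τ / (1 + 4 * a * τ)))] at hmul
    simp only [Wf, WXf]
    refine hmul.congr_deriv ?_
    rw [clm_pair (fderiv ℝ U (x0 / (1 + 4 * a * τ), τ / (1 + 4 * a * τ)))]
    field_simp
    ring
  -- the t-partial of Wf at (x,t)
  set q0 : ℝ × ℝ := (x / (1 + 4 * a * t), t / (1 + 4 * a * t)) with hq0
  have hDT : fderiv ℝ (Wf U a) (x, t) (0, 1)
      = (1 + 4 * a * t) ^ (-(1 / 2) : ℝ) * Real.exp (-(a * x ^ 2) / (1 + 4 * a * t))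
        * ((4 * a ^ 2 * x ^ 2 / (1 + 4 * a * t) ^ 2 - 2 * a / (1 + 4 * a * t)) * U q0
           - (4 * a * x / (1 + 4 * a * t) ^ 2) * fderiv ℝ U q0 (1, 0)
           + fderiv ℝ U q0 (0, 1) / (1 + 4 * a * t) ^ 2) := by
    refine pt_eq (hWd _ ht) ?_
    show HasDerivAt (fun τ => Wf U a (x, τ)) _ t
    have hs : HasDerivAt (fun τ : ℝ => 1 + 4 * a * τ) (4 * a) t := by
      simpa using (((hasDerivAt_id t).const_mul (4 * a)).const_add (1 : ℝ))
    have h1 : HasDerivAt (fun τ : ℝ => (1 + 4 * a * τ) ^ (-(1 / 2) : ℝ))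
        (4 * a * (-(1 / 2) : ℝ) * (1 + 4 * a * t) ^ ((-(1 / 2) : ℝ) - 1)) t :=
      hs.rpow_const (Or.inl ht.ne')
    have h2 : HasDerivAt (fun τ : ℝ => Real.exp (-(a * x ^ 2) / (1 + 4 * a * τ)))
        (Real.exp (-(a * x ^ 2) / (1 + 4 * a * t))
          * ((0 * (1 + 4 * a * t) - -(a * x ^ 2) * (4 * a)) / (1 + 4 * a * t) ^ 2)) t :=
      (((hasDerivAt_const t (-(a * x ^ 2))).div hs ht.ne')).exp
    have hg : HasDerivAt (fun τ : ℝ => (x / (1 + 4 * a * τ), τ / (1 + 4 * a * τ)))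
        (((0 * (1 + 4 * a * t) - x * (4 * a)) / (1 + 4 * a * t) ^ 2 : ℝ),
         ((1 * (1 + 4 * a * t) - t * (4 * a)) / (1 + 4 * a * t) ^ 2 : ℝ)) t :=
      HasDerivAt.prodMk ((hasDerivAt_const t x).div hs ht.ne') ((hasDerivAt_id t).div hs ht.ne')
    have hUs : HasDerivAt (fun τ : ℝ => U (x / (1 + 4 * a * τ), τ / (1 + 4 * a * τ)))
        (fderiv ℝ U q0
          ((0 * (1 + 4 * a * t) - x * (4 * a)) / (1 + 4 * a * t) ^ 2,
           (1 * (1 + 4 * a * t) - t * (4 * a)) / (1 + 4 * a * t) ^ 2)) t :=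
      (hUd _).hasFDerivAt.comp_hasDerivAt t hg
    have hmul := (h1.mul h2).mul hUs
    rw [clm_pair (fderiv ℝ U q0)] at hmul
    simp only [Wf]
    refine hmul.congr_deriv ?_
    rw [Real.rpow_sub ht, Real.rpow_one]
    simp only [Pi.mul_apply, Pi.add_apply, hq0]
    field_simp
    ring
  -- the x-partial of WXf at (x,t)
  have hDXX : fderiv ℝ (WXf U a) (x, t) (1, 0)
      = (1 + 4 * a * t) ^ (-(1 / 2) : ℝ) * Real.exp (-(a * x ^ 2) / (1 + 4 * a * t))
        * ((4 * a ^ 2 * x ^ 2 / (1 + 4 * a * t) ^ 2 - 2 * a / (1 + 4 * a * t)) * U q0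
           - (4 * a * x / (1 + 4 * a * t) ^ 2) * fderiv ℝ U q0 (1, 0)
           + fderiv ℝ (fun p : ℝ × ℝ => fderiv ℝ U p (1, 0)) q0 (1, 0)
              / (1 + 4 * a * t) ^ 2) := by
    refine px_eq (hWXd _ ht) ?_
    show HasDerivAt (fun y => WXf U a (y, t)) _ x
    have hA : HasDerivAt (fun y : ℝ => -(a * y ^ 2) / (1 + 4 * a * t))
        (-(a * (2 * x ^ 1)) / (1 + 4 * a * t)) x := by
      have := (((hasDerivAt_pow 2 x).const_mul a).neg).div_const (1 + 4 * a * t)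
      simpa using this
    have hE : HasDerivAt (fun y : ℝ => Real.exp (-(a * y ^ 2) / (1 + 4 * a * t)))
        (Real.exp (-(a * x ^ 2) / (1 + 4 * a * t)) * (-(a * (2 * x ^ 1)) / (1 + 4 * a * t)))
        x := hA.exp
    have hg : HasDerivAt (fun y : ℝ => (y / (1 + 4 * a * t), t / (1 + 4 * a * t)))
        ((1 / (1 + 4 * a * t) : ℝ), (0 : ℝ)) x := by
      have := HasDerivAt.prodMk ((hasDerivAt_id x).div_const (1 + 4 * a * t))
        (hasDerivAt_const x (t / (1 + 4 * a * t)))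
      simpa using this
    have hUs : HasDerivAt (fun y : ℝ => U (y / (1 + 4 * a * t), t / (1 + 4 * a * t)))
        (fderiv ℝ U q0 (1 / (1 + 4 * a * t), 0)) x :=
      (hUd _).hasFDerivAt.comp_hasDerivAt x hg
    have huxs : HasDerivAt
        (fun y : ℝ => fderiv ℝ U (y / (1 + 4 * a * t), t / (1 + 4 * a * t)) (1, 0))
        (fderiv ℝ (fun p : ℝ × ℝ => fderiv ℝ U p (1, 0)) q0 (1 / (1 + 4 * a * t), 0)) x :=
      (hux _).hasFDerivAt.comp_hasDerivAt x hg
    have hlin : HasDerivAt (fun y : ℝ => -2 * a * y / (1 + 4 * a * t))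
        (-2 * a / (1 + 4 * a * t)) x := by
      have := ((hasDerivAt_id x).const_mul (-2 * a)).div_const (1 + 4 * a * t)
      simpa using this
    have hmul := (hE.const_mul ((1 + 4 * a * t) ^ (-(1 / 2) : ℝ))).mul
      ((hlin.mul hUs).add (huxs.div_const (1 + 4 * a * t)))
    rw [clm_pair (fderiv ℝ U q0) (1 / (1 + 4 * a * t)) 0,
      clm_pair (fderiv ℝ (fun p : ℝ × ℝ => fderiv ℝ U p (1, 0)) q0)
        (1 / (1 + 4 * a * t)) 0] at hmul
    simp only [WXf]
    refine hmul.congr_deriv ?_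
    simp only [Pi.mul_apply, Pi.add_apply, hq0]
    field_simp
    ring
  -- eventual equality for the second derivative
  have hopen : IsOpen {p : ℝ × ℝ | 0 < 1 + 4 * a * p.2} :=
    isOpen_lt continuous_const (by fun_prop)
  have hev : (fun p : ℝ × ℝ => fderiv ℝ (Wf U a) p (1, 0)) =ᶠ[nhds (x, t)] WXf U a :=
    Filter.eventually_of_mem (hopen.mem_nhds ht) (fun p hp => hWX p hp)
  have h2nd : fderiv ℝ (fun p : ℝ × ℝ => fderiv ℝ (Wf U a) p (1, 0)) (x, t)
      = fderiv ℝ (WXf U a) (x, t) := hev.fderiv_eq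
  rw [hDT, h2nd, hDXX, hh q0]


/-- The heat equation `u_t = u_xx` admits the one-parameter projective symmetry
group generated by `X₅ = 4t²∂/∂t + 4tx∂/∂x − (x² + 2t)u∂/∂u`: if `u` solves the
heat equation, then on the open set where `1 + 4at > 0` the function
`v(x,t) = (1+4at)^{-1/2}·exp(−a x²/(1+4at))·u(x/(1+4at), t/(1+4at))` also solves
it. Partial derivatives are `fderiv` of the uncurried functions. -/
theorem heat_equation_projective_symmetry
    (u : ℝ → ℝ → ℝ) (hu : ContDiff ℝ 2 (fun p : ℝ × ℝ => u p.1 p.2))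
    (hheat : ∀ x t : ℝ,
      fderiv ℝ (fun p : ℝ × ℝ => u p.1 p.2) (x, t) (0, 1)
        = fderiv ℝ (fun p : ℝ × ℝ =>
            fderiv ℝ (fun q : ℝ × ℝ => u q.1 q.2) p (1, 0)) (x, t) (1, 0))
    (a : ℝ)
    (v : ℝ → ℝ → ℝ)
    (hv : ∀ x t, v x t = (1 + 4 * a * t) ^ (-(1 / 2) : ℝ)
        * Real.exp (-(a * x ^ 2) / (1 + 4 * a * t))
        * u (x / (1 + 4 * a * t)) (t / (1 + 4 * a * t))) :
    ∀ x t : ℝ, 0 < 1 + 4 * a * t →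
      fderiv ℝ (fun p : ℝ × ℝ => v p.1 p.2) (x, t) (0, 1)
        = fderiv ℝ (fun p : ℝ × ℝ =>
            fderiv ℝ (fun q : ℝ × ℝ => v q.1 q.2) p (1, 0)) (x, t) (1, 0) := by
  intro x t ht
  have hVW : (fun p : ℝ × ℝ => v p.1 p.2) = Wf (fun p : ℝ × ℝ => u p.1 p.2) a :=
    funext fun p => hv p.1 p.2
  rw [hVW]
  exact heatAux _ hu (fun q => by obtain ⟨qx, qt⟩ := q; exact hheat qx qt) a x t ht
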